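/- arXiv:1804.07929 — 2 statements merged into one kernel-verified Lean document; each statement's English description precedes it below -/
import Mathlib

section
/- For every prime p > 3, ∑_{k=1}^{⌊p/3⌋} 1/(p - 3k) ≡ (1/2)·q_p(3) - (1/4)·p·q_p(3)^2 (mod p^2), where q_p(3) = (3^{p-1}-1)/p, as a congruence of p-adic integers. -/
set_option linter.unusedSectionVars false
open Finset
namespace LehmerAux
variable {p : ℕ} [hp : Fact p.Prime]

lemma norm_nat_unit {j : ℕ} (h1 : 0 < j) (h2 : j < p) : ‖(j : ℚ_[p])‖ = 1 := by
  have h : ¬ ‖((j:ℤ) : ℚ_[p])‖ < 1 := by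
    rw [Padic.norm_intCast_lt_one_iff, Int.natCast_dvd_natCast]
    exact Nat.not_dvd_of_pos_of_lt h1 h2
  have h2 := Padic.norm_int_le_one (p := p) (j : ℤ)
  push_cast at h h2
  linarith [lt_or_eq_of_le h2, h]

lemma nat_unit_ne_zero {j : ℕ} (h1 : 0 < j) (h2 : j < p) : (j : ℚ_[p]) ≠ 0 := by
  intro h
  have := norm_nat_unit (p := p) h1 h2
  rw [h, norm_zero] at this; norm_num at this

lemma norm_nat_le_one (j : ℕ) : ‖(j : ℚ_[p])‖ ≤ 1 := by
  have := Padic.norm_int_le_one (p := p) (j : ℤ); push_cast at this; exact this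

lemma norm_two (h : 2 < p) : ‖(2:ℚ_[p])‖ = 1 := by
  have := norm_nat_unit (p := p) (j := 2) (by norm_num) h
  simpa using this

lemma norm_three (h : 3 < p) : ‖(3:ℚ_[p])‖ = 1 := by
  have := norm_nat_unit (p := p) (j := 3) (by norm_num) h
  simpa using this

lemma norm_four (h : 3 < p) : ‖(4:ℚ_[p])‖ = 1 := by
  have h4 : (4:ℚ_[p]) = 2 * 2 := by norm_num
  rw [h4, norm_mul, norm_two (by omega)]; norm_num

lemma norm_nine (h : 3 < p) : ‖(9:ℚ_[p])‖ = 1 := by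
  have h9 : (9:ℚ_[p]) = 3 * 3 := by norm_num
  rw [h9, norm_mul, norm_three h]; norm_num

lemma sum_norm_le {s : Finset ℕ} {f : ℕ → ℚ_[p]} {C : ℝ} (h0 : 0 ≤ C)
    (h : ∀ i ∈ s, ‖f i‖ ≤ C) : ‖∑ i ∈ s, f i‖ ≤ C :=
  IsUltrametricDist.norm_sum_le_of_forall_le_of_nonneg h0 h

lemma norm_add_le' {a b : ℚ_[p]} {C : ℝ} (ha : ‖a‖ ≤ C) (hb : ‖b‖ ≤ C) : ‖a + b‖ ≤ C :=
  (Padic.nonarchimedean a b).trans (max_le ha hb)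

lemma norm_sub_le' {a b : ℚ_[p]} {C : ℝ} (ha : ‖a‖ ≤ C) (hb : ‖b‖ ≤ C) : ‖a - b‖ ≤ C := by
  rw [sub_eq_add_neg]; exact norm_add_le' ha (by rwa [norm_neg])

lemma mod_inv_aux {a b : ℕ} (hab : a * b % p = 1 % p) {k : ℕ} (hk : k < p) :
    a * (b * k % p) % p = k := by
  have h1 : a * (b * k % p) ≡ a * b * k [MOD p] :=
    (Nat.ModEq.mul_left a (Nat.mod_modEq (b*k) p)).trans (by rw [mul_assoc])
  have h2 : a * b * k ≡ 1 * k [MOD p] := Nat.ModEq.mul_right k hab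
  have := (h1.trans h2)
  rwa [one_mul, Nat.ModEq, Nat.mod_eq_of_lt hk] at this

lemma mem_Ioc_mul_mod {a : ℕ} (ha : ¬ p ∣ a) {k : ℕ} (hk : k ∈ Ioc 0 (p-1)) :
    a * k % p ∈ Ioc 0 (p-1) := by
  have hp2 : 2 ≤ p := hp.out.two_le
  rw [mem_Ioc] at hk ⊢
  have hkp : ¬ p ∣ k := Nat.not_dvd_of_pos_of_lt hk.1 (by omega)
  have : ¬ p ∣ a * k := fun h => ((Nat.Prime.dvd_mul hp.out).mp h).elim ha hkp
  have hlt : a * k % p < p := Nat.mod_lt _ (by omega)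
  have hne : a * k % p ≠ 0 := fun h => this (Nat.dvd_iff_mod_eq_zero.mpr h)
  omega

lemma sum_mul_mod_reindex {a b : ℕ} (hab : a * b % p = 1 % p) (hba : b * a % p = 1 % p)
    (ha : ¬ p ∣ a) (hb : ¬ p ∣ b) (f : ℕ → ℚ_[p]) :
    ∑ k ∈ Ioc 0 (p-1), f (a * k % p) = ∑ k ∈ Ioc 0 (p-1), f k := by
  refine sum_nbij' (fun k => a * k % p) (fun k => b * k % p) ?_ ?_ ?_ ?_ ?_
  · exact fun k hk => mem_Ioc_mul_mod ha hk
  · exact fun k hk => mem_Ioc_mul_mod hb hk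
  · intro k hk; rw [mem_Ioc] at hk; exact mod_inv_aux hba (by omega)
  · intro k hk; rw [mem_Ioc] at hk; exact mod_inv_aux hab (by omega)
  · exact fun k _ => rfl

lemma sum_inv_sq_norm (h3 : 3 < p) :
    ‖∑ k ∈ Ioc 0 (p-1), ((k : ℚ_[p])⁻¹)^2‖ ≤ (p:ℝ)⁻¹ := by
  have hp2 : 2 ≤ p := hp.out.two_le
  have hpinv0 : (0:ℝ) ≤ (p:ℝ)⁻¹ := by positivity
  set c := 2^(p-2) with hc
  have hfermat : 2^(p-1) % p = 1 % p := by
    have hco : Nat.Coprime 2 p := (Nat.coprime_primes Nat.prime_two hp.out).mpr (by omega)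
    have := Nat.ModEq.pow_totient hco
    rwa [Nat.totient_prime hp.out] at this
  have h2c : 2 * c % p = 1 % p := by
    rw [hc, ← pow_succ']
    have h : p - 2 + 1 = p - 1 := by omega
    rw [h]; exact hfermat
  have hc2 : c * 2 % p = 1 % p := by rwa [mul_comm]
  have hnd2 : ¬ p ∣ 2 := Nat.not_dvd_of_pos_of_lt (by norm_num) (by omega)
  have hndc : ¬ p ∣ c := fun h => hnd2 (hp.out.dvd_of_dvd_pow (by simpa [hc] using h))
  set f : ℕ → ℚ_[p] := fun j => ((j : ℚ_[p])⁻¹)^2 with hf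
  set Sig2 := ∑ k ∈ Ioc 0 (p-1), f k with hSig
  have hre : ∑ k ∈ Ioc 0 (p-1), f (2 * k % p) = Sig2 := sum_mul_mod_reindex h2c hc2 hnd2 hndc f
  have hterm : ∀ k ∈ Ioc 0 (p-1), ‖f (2 * k % p) - (((2:ℚ_[p]) * k)⁻¹)^2‖ ≤ (p:ℝ)⁻¹ := by
    intro k hk
    have hkk := hk
    rw [mem_Ioc] at hkk
    set r := 2 * k % p with hr
    have hrmem : r ∈ Ioc 0 (p-1) := mem_Ioc_mul_mod hnd2 hk
    rw [mem_Ioc] at hrmem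
    have hra : ‖(r : ℚ_[p])‖ = 1 := norm_nat_unit hrmem.1 (by omega)
    have hrne : (r : ℚ_[p]) ≠ 0 := nat_unit_ne_zero hrmem.1 (by omega)
    have hknorm : ‖(k : ℚ_[p])‖ = 1 := norm_nat_unit hkk.1 (by omega)
    have hb : ‖(2:ℚ_[p]) * k‖ = 1 := by rw [norm_mul, norm_two (by omega), hknorm, mul_one]
    have hbne : (2:ℚ_[p]) * k ≠ 0 := by
      intro h; rw [h, norm_zero] at hb; norm_num at hb
    set d : ℚ_[p] := ((2 * k / p : ℕ) : ℚ_[p]) with hd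
    have hcast : (2:ℚ_[p]) * k = (r : ℚ_[p]) + p * d := by
      have h0 := Nat.mod_add_div (2*k) p
      calc (2:ℚ_[p]) * k = ((2*k : ℕ) : ℚ_[p]) := by push_cast; ring
        _ = ((2*k % p + p * (2*k/p) : ℕ) : ℚ_[p]) := by rw [h0]
        _ = (r : ℚ_[p]) + p * d := by push_cast; ring
    have hkey : f r - (((2:ℚ_[p]) * k)⁻¹)^2
        = ((p : ℚ_[p]) * d * (((2:ℚ_[p])*k) + r)) / ((r:ℚ_[p])^2 * ((2:ℚ_[p])*k)^2) := by
      rw [hf]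
      dsimp only
      rw [hcast] at hbne ⊢
      field_simp
      ring
    rw [hkey, norm_div, norm_mul, norm_mul, Padic.norm_p]
    have hden : ‖(r:ℚ_[p])^2 * ((2:ℚ_[p])*k)^2‖ = 1 := by
      rw [norm_mul, norm_pow, norm_pow, hra, hb]; norm_num
    rw [hden, div_one]
    have hd1 : ‖d‖ ≤ 1 := norm_nat_le_one _
    have hbr : ‖(2:ℚ_[p])*k + r‖ ≤ 1 := norm_add_le' hb.le hra.le
    calc (p:ℝ)⁻¹ * ‖d‖ * ‖(2:ℚ_[p])*k + r‖ ≤ (p:ℝ)⁻¹ * 1 * 1 := by gcongr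
      _ = (p:ℝ)⁻¹ := by ring
  have hDelta : ‖∑ k ∈ Ioc 0 (p-1), (f (2*k%p) - (((2:ℚ_[p]) * k)⁻¹)^2)‖ ≤ (p:ℝ)⁻¹ :=
    sum_norm_le hpinv0 hterm
  have hgsum : ∑ k ∈ Ioc 0 (p-1), (((2:ℚ_[p]) * k)⁻¹)^2 = ((2:ℚ_[p])⁻¹)^2 * Sig2 := by
    rw [hSig, mul_sum]
    apply sum_congr rfl
    intro k _
    rw [hf]
    dsimp only
    rw [mul_inv]
    ring
  have hsplit : ∑ k ∈ Ioc 0 (p-1), (f (2*k%p) - (((2:ℚ_[p]) * k)⁻¹)^2)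
      = Sig2 - ((2:ℚ_[p])⁻¹)^2 * Sig2 := by
    rw [sum_sub_distrib, hre, hgsum]
  rw [hsplit] at hDelta
  have h2ne : (2:ℚ_[p]) ≠ 0 := by
    intro h; have := norm_two (p := p) (by omega); rw [h, norm_zero] at this; norm_num at this
  have hfactor : Sig2 - ((2:ℚ_[p])⁻¹)^2 * Sig2 = Sig2 * (3 / 4) := by
    field_simp
    ring
  rw [hfactor, norm_mul] at hDelta
  have h34 : ‖(3:ℚ_[p]) / 4‖ = 1 := by
    rw [norm_div, norm_three h3, norm_four h3]; norm_num
  rwa [h34, mul_one] at hDelta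


lemma prod_expansion (h2 : ‖(2 : ℚ_[p])‖ = 1) (s : Finset ℕ) (x : ℕ → ℚ_[p]) (ε : ℝ)
    (hε0 : 0 ≤ ε) (hε1 : ε ≤ 1) (hx : ∀ k ∈ s, ‖x k‖ ≤ ε) :
    ‖∏ k ∈ s, (1 + x k) -
      (1 + ∑ k ∈ s, x k + ((∑ k ∈ s, x k)^2 - ∑ k ∈ s, (x k)^2)/2)‖ ≤ ε^3 := by
  induction s using Finset.cons_induction with
  | empty => simp [pow_nonneg hε0]
  | cons a s ha ih =>
    have hxa : ‖x a‖ ≤ ε := hx a (mem_cons_self a s)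
    have hxs : ∀ k ∈ s, ‖x k‖ ≤ ε := fun k hk => hx k (mem_cons_of_mem hk)
    have ihs := ih hxs
    rw [prod_cons, sum_cons, sum_cons]
    set S1 := ∑ k ∈ s, x k with hS1
    set S2 := ∑ k ∈ s, (x k)^2 with hS2
    set P := ∏ k ∈ s, (1 + x k) with hP
    have hnS1 : ‖S1‖ ≤ ε := sum_norm_le hε0 hxs
    have hnS2 : ‖S2‖ ≤ ε^2 := sum_norm_le (pow_nonneg hε0 2) (fun k hk => by
      rw [norm_pow]; exact pow_le_pow_left₀ (norm_nonneg _) (hxs k hk) 2)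
    have key : (1 + x a) * P - (1 + (x a + S1) + ((x a + S1)^2 - ((x a)^2 + S2))/2)
        = (1 + x a) * (P - (1 + S1 + (S1^2 - S2)/2)) + x a * ((S1^2 - S2)/2) := by
      ring
    rw [key]
    apply norm_add_le'
    · rw [norm_mul]
      have h1a : ‖1 + x a‖ ≤ 1 := norm_add_le' (norm_one.le) (hxa.trans hε1)
      calc ‖1 + x a‖ * ‖P - (1 + S1 + (S1^2 - S2)/2)‖ ≤ 1 * (ε^3) :=
            mul_le_mul h1a ihs (norm_nonneg _) zero_le_one
        _ = ε^3 := one_mul _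
    · rw [norm_mul, norm_div, h2, div_one]
      have hd : ‖S1^2 - S2‖ ≤ ε^2 := norm_sub_le'
        (by rw [norm_pow]; exact pow_le_pow_left₀ (norm_nonneg _) hnS1 2) hnS2
      calc ‖x a‖ * ‖S1^2 - S2‖ ≤ ε * ε^2 :=
            mul_le_mul hxa hd (norm_nonneg _) hε0
        _ = ε^3 := by ring

lemma prod_mul_mod_reindex {a b : ℕ} (hab : a * b % p = 1 % p) (hba : b * a % p = 1 % p)
    (ha : ¬ p ∣ a) (hb : ¬ p ∣ b) (f : ℕ → ℚ_[p]) :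
    ∏ k ∈ Ioc 0 (p-1), f (a * k % p) = ∏ k ∈ Ioc 0 (p-1), f k := by
  refine prod_nbij' (fun k => a * k % p) (fun k => b * k % p) ?_ ?_ ?_ ?_ ?_
  · exact fun k hk => mem_Ioc_mul_mod ha hk
  · exact fun k hk => mem_Ioc_mul_mod hb hk
  · intro k hk; rw [mem_Ioc] at hk; exact mod_inv_aux hba (by omega)
  · intro k hk; rw [mem_Ioc] at hk; exact mod_inv_aux hab (by omega)
  · exact fun k _ => rfl

lemma sum_reflect {lo hi lo' hi' : ℕ} (h1 : lo' + hi + 1 = p) (h2 : hi' + lo + 1 = p)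
    (f g : ℕ → ℚ_[p]) (hfg : ∀ k ∈ Ioc lo hi, f k = g (p - k)) :
    ∑ k ∈ Ioc lo hi, f k = ∑ k ∈ Ioc lo' hi', g k := by
  refine sum_nbij' (fun k => p - k) (fun k => p - k) ?_ ?_ ?_ ?_ hfg
  · intro k hk; simp only [mem_Ioc] at hk ⊢; omega
  · intro k hk; simp only [mem_Ioc] at hk ⊢; omega
  · intro k hk; simp only [mem_Ioc] at hk; omega
  · intro k hk; simp only [mem_Ioc] at hk; omega

lemma prod_identity (h3 : 3 < p) :
    (3:ℚ_[p])^(p-1) = ∏ k ∈ Ioc 0 (p-1),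
      (1 + (p:ℚ_[p]) * (3*k/p : ℕ) / ((3*k % p : ℕ) : ℚ_[p])) := by
  have hp2 : 2 ≤ p := hp.out.two_le
  have hnd3 : ¬ p ∣ 3 := Nat.not_dvd_of_pos_of_lt (by norm_num) h3
  have hrne : ∀ k ∈ Ioc 0 (p-1), ((3*k % p : ℕ) : ℚ_[p]) ≠ 0 := by
    intro k hk
    have := mem_Ioc_mul_mod hnd3 hk
    rw [mem_Ioc] at this
    exact nat_unit_ne_zero this.1 (by omega)
  have hterm : ∀ k ∈ Ioc 0 (p-1),
      1 + (p:ℚ_[p]) * (3*k/p : ℕ) / ((3*k % p : ℕ) : ℚ_[p])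
        = ((3*k : ℕ) : ℚ_[p]) / ((3*k % p : ℕ) : ℚ_[p]) := by
    intro k hk
    have h0 := Nat.mod_add_div (3*k) p
    have hcast : ((3*k % p : ℕ) : ℚ_[p]) + (p:ℚ_[p]) * (3*k/p : ℕ) = ((3*k:ℕ) : ℚ_[p]) := by
      calc ((3*k % p : ℕ) : ℚ_[p]) + (p:ℚ_[p]) * (3*k/p : ℕ)
          = ((3*k % p + p * (3*k/p) : ℕ) : ℚ_[p]) := by push_cast; ring
        _ = ((3*k:ℕ) : ℚ_[p]) := by rw [h0]
    rw [← hcast]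
    field_simp [hrne k hk]
  rw [prod_congr rfl hterm, prod_div_distrib]
  have hre : ∏ k ∈ Ioc 0 (p-1), ((3 * k % p : ℕ) : ℚ_[p])
      = ∏ k ∈ Ioc 0 (p-1), ((k : ℕ) : ℚ_[p]) := by
    have hfermat : 3^(p-1) % p = 1 % p := by
      have hco : Nat.Coprime 3 p := (Nat.coprime_primes Nat.prime_three hp.out).mpr (by omega)
      have := Nat.ModEq.pow_totient hco
      rwa [Nat.totient_prime hp.out] at this
    have h3c : 3 * 3^(p-2) % p = 1 % p := by
      rw [← pow_succ']
      have h : p - 2 + 1 = p - 1 := by omega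
      rw [h]; exact hfermat
    have hc3 : 3^(p-2) * 3 % p = 1 % p := by rwa [mul_comm]
    have hndc : ¬ p ∣ 3^(p-2) := fun h => hnd3 (hp.out.dvd_of_dvd_pow h)
    exact prod_mul_mod_reindex h3c hc3 hnd3 hndc (fun j => ((j:ℕ) : ℚ_[p]))
  rw [hre]
  have hprodne : ∏ k ∈ Ioc 0 (p-1), ((k : ℕ) : ℚ_[p]) ≠ 0 := by
    apply prod_ne_zero_iff.mpr
    intro k hk
    rw [mem_Ioc] at hk
    exact nat_unit_ne_zero hk.1 (by omega)
  have h31 : ∏ k ∈ Ioc 0 (p-1), ((3*k : ℕ) : ℚ_[p])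
      = (3:ℚ_[p])^(p-1) * ∏ k ∈ Ioc 0 (p-1), ((k:ℕ) : ℚ_[p]) := by
    have : ∀ k ∈ Ioc 0 (p-1), ((3*k : ℕ) : ℚ_[p]) = 3 * ((k:ℕ):ℚ_[p]) := by
      intro k _; push_cast; ring
    rw [prod_congr rfl this, prod_mul_distrib, prod_const, Nat.card_Ioc, Nat.sub_zero]
  rw [h31, mul_div_assoc, div_self hprodne, mul_one]

end LehmerAux

open LehmerAux in
/-- Lehmer (1938): for a prime `p > 3`, with `q = q_p(3) = (3^{p-1}-1)/p`,
`∑_{k=1}^{⌊p/3⌋} 1/(p-3k) ≡ ½q - ¼p·q² (mod p²)` in `ℤ_p`. -/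
theorem lehmer_third (p : ℕ) [hp : Fact p.Prime] (h3 : 3 < p)
    (q : ℚ) (hq : q = ((3 ^ (p - 1) - 1 : ℚ)) / p) :
    ∃ z : ℤ_[p],
      (∑ k ∈ Finset.Icc 1 (p / 3), (1 : ℚ_[p]) / ((p : ℚ_[p]) - 3 * (k : ℚ_[p]))) -
        ((1 / 2) * (q : ℚ_[p]) - (1 / 4) * (p : ℚ_[p]) * (q : ℚ_[p]) ^ 2)
      = (p : ℚ_[p]) ^ 2 * (z : ℚ_[p]) := by
  classical
  have hp2 : 2 ≤ p := hp.out.two_le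
  have hnd3 : ¬ p ∣ 3 := Nat.not_dvd_of_pos_of_lt (by norm_num) h3
  have hp3 : p % 3 ≠ 0 := by
    intro h
    rcases (Nat.Prime.eq_one_or_self_of_dvd hp.out 3 (Nat.dvd_of_mod_eq_zero h)) with h' | h' <;>
      omega
  set m := p / 3 with hm
  set m2 := 2 * p / 3 with hm2
  have hpne : (p:ℚ_[p]) ≠ 0 := Nat.cast_ne_zero.mpr (by omega)
  have hε0 : (0:ℝ) ≤ (p:ℝ)⁻¹ := by positivity
  have hε1 : (p:ℝ)⁻¹ ≤ 1 := by
    rw [inv_le_one_iff₀]; right; exact_mod_cast by omega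
  -- range facts
  have hm2eq : (3*m+1 = p ∧ m2 = 2*m) ∨ (3*m+2 = p ∧ m2 = 2*m+1) := by omega
  have hmm2 : m < m2 := by omega
  have hm2p : m2 ≤ p - 1 := by omega
  -- values of 3k/p and 3k%p on the three ranges
  have htr1 : ∀ k, 0 < k → k ≤ m → 3*k/p = 0 ∧ 3*k % p = 3*k := by
    intro k h1 h2
    have h3k : 3*k < p := by omega
    exact ⟨Nat.div_eq_of_lt h3k, Nat.mod_eq_of_lt h3k⟩
  have htr2 : ∀ k, m < k → k ≤ m2 → 3*k/p = 1 ∧ 3*k % p = 3*k - p := by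
    intro k h1 h2
    have hdiv : 3*k/p = 1 := Nat.div_eq_of_lt_le (by omega) (by omega)
    have hmod := Nat.mod_add_div (3*k) p
    rw [hdiv] at hmod
    exact ⟨hdiv, by omega⟩
  have htr3 : ∀ k, m2 < k → k ≤ p - 1 → 3*k/p = 2 ∧ 3*k % p = 3*k - 2*p := by
    intro k h1 h2
    have hdiv : 3*k/p = 2 := Nat.div_eq_of_lt_le (by omega) (by omega)
    have hmod := Nat.mod_add_div (3*k) p
    rw [hdiv] at hmod
    exact ⟨hdiv, by omega⟩
  -- the main sums
  set Mv := ∑ k ∈ Finset.Ioc m m2, ((3*k - p : ℕ) : ℚ_[p])⁻¹ with hMv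
  set M2v := ∑ k ∈ Finset.Ioc m m2, (((3*k - p : ℕ) : ℚ_[p])⁻¹)^2 with hM2v
  set Sv := ∑ k ∈ Finset.Ioc 0 m, ((p - 3*k : ℕ) : ℚ_[p])⁻¹ with hSv
  set S2v := ∑ k ∈ Finset.Ioc 0 m, (((p - 3*k : ℕ) : ℚ_[p])⁻¹)^2 with hS2v
  set s1 := ∑ k ∈ Finset.Ioc 0 (p-1), ((3*k/p : ℕ) : ℚ_[p]) / ((3*k % p : ℕ) : ℚ_[p]) with hs1
  set s2 := ∑ k ∈ Finset.Ioc 0 (p-1),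
    (((3*k/p : ℕ) : ℚ_[p]) / ((3*k % p : ℕ) : ℚ_[p]))^2 with hs2
  -- splitting of sums over Ioc 0 (p-1)
  have hsplit : ∀ f : ℕ → ℚ_[p], ∑ k ∈ Finset.Ioc 0 (p-1), f k
      = (∑ k ∈ Finset.Ioc 0 m, f k) + (∑ k ∈ Finset.Ioc m m2, f k)
        + (∑ k ∈ Finset.Ioc m2 (p-1), f k) := by
    intro f
    rw [← Finset.sum_Ioc_consecutive f (show (0:ℕ) ≤ m2 by omega) hm2p,
      ← Finset.sum_Ioc_consecutive f (show (0:ℕ) ≤ m by omega) (le_of_lt hmm2)]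
  -- denominators are units
  have hden0 : ∀ k, 0 < k → k ≤ m → ‖((p - 3*k : ℕ) : ℚ_[p])‖ = 1 ∧ ((p - 3*k : ℕ) : ℚ_[p]) ≠ 0 := by
    intro k h1 h2
    have hb : 0 < p - 3*k := by omega
    have hb2 : p - 3*k < p := by omega
    exact ⟨norm_nat_unit hb hb2, nat_unit_ne_zero hb hb2⟩
  have hden1 : ∀ k, m < k → k ≤ m2 → ‖((3*k - p : ℕ) : ℚ_[p])‖ = 1 ∧ ((3*k - p : ℕ) : ℚ_[p]) ≠ 0 := by
    intro k h1 h2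
    have hb : 0 < 3*k - p := by omega
    have hb2 : 3*k - p < p := by omega
    exact ⟨norm_nat_unit hb hb2, nat_unit_ne_zero hb hb2⟩
  have hden1' : ∀ k, m < k → k ≤ m2 → ‖((2*p - 3*k : ℕ) : ℚ_[p])‖ = 1 ∧ ((2*p - 3*k : ℕ) : ℚ_[p]) ≠ 0 := by
    intro k h1 h2
    have hb : 0 < 2*p - 3*k := by omega
    have hb2 : 2*p - 3*k < p := by omega
    exact ⟨norm_nat_unit hb hb2, nat_unit_ne_zero hb hb2⟩
  -- s1 = Mv + 2 Sv
  have hTS : ∑ k ∈ Finset.Ioc m2 (p-1), ((3*k - 2*p : ℕ) : ℚ_[p])⁻¹ = Sv := by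
    rw [hSv]
    apply sum_reflect (by omega) (by omega)
    intro k hk
    rw [Finset.mem_Ioc] at hk
    have harg : p - 3*(p - k) = 3*k - 2*p := by omega
    rw [harg]
  have hT2S2 : ∑ k ∈ Finset.Ioc m2 (p-1), (((3*k - 2*p : ℕ) : ℚ_[p])⁻¹)^2 = S2v := by
    rw [hS2v]
    apply sum_reflect (by omega) (by omega)
    intro k hk
    rw [Finset.mem_Ioc] at hk
    have harg : p - 3*(p - k) = 3*k - 2*p := by omega
    rw [harg]
  have hs1split : s1 = Mv + 2 * Sv := by
    rw [hs1, hsplit]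
    have e1 : ∑ k ∈ Finset.Ioc 0 m, ((3*k/p : ℕ) : ℚ_[p]) / ((3*k % p : ℕ) : ℚ_[p]) = 0 := by
      apply Finset.sum_eq_zero
      intro k hk
      rw [Finset.mem_Ioc] at hk
      rw [(htr1 k hk.1 hk.2).1]
      simp
    have e2 : ∑ k ∈ Finset.Ioc m m2, ((3*k/p : ℕ) : ℚ_[p]) / ((3*k % p : ℕ) : ℚ_[p]) = Mv := by
      rw [hMv]
      apply Finset.sum_congr rfl
      intro k hk
      rw [Finset.mem_Ioc] at hk
      rw [(htr2 k hk.1 hk.2).1, (htr2 k hk.1 hk.2).2]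
      simp [one_div]
    have e3 : ∑ k ∈ Finset.Ioc m2 (p-1), ((3*k/p : ℕ) : ℚ_[p]) / ((3*k % p : ℕ) : ℚ_[p])
        = 2 * Sv := by
      rw [← hTS, Finset.mul_sum]
      apply Finset.sum_congr rfl
      intro k hk
      rw [Finset.mem_Ioc] at hk
      rw [(htr3 k hk.1 hk.2).1, (htr3 k hk.1 hk.2).2]
      push_cast
      rw [div_eq_mul_inv]
    rw [e1, e2, e3]; ring
  have hs2split : s2 = M2v + 4 * S2v := by
    rw [hs2, hsplit]
    have e1 : ∑ k ∈ Finset.Ioc 0 m, (((3*k/p : ℕ) : ℚ_[p]) / ((3*k % p : ℕ) : ℚ_[p]))^2 = 0 := by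
      apply Finset.sum_eq_zero
      intro k hk
      rw [Finset.mem_Ioc] at hk
      rw [(htr1 k hk.1 hk.2).1]
      simp
    have e2 : ∑ k ∈ Finset.Ioc m m2, (((3*k/p : ℕ) : ℚ_[p]) / ((3*k % p : ℕ) : ℚ_[p]))^2
        = M2v := by
      rw [hM2v]
      apply Finset.sum_congr rfl
      intro k hk
      rw [Finset.mem_Ioc] at hk
      rw [(htr2 k hk.1 hk.2).1, (htr2 k hk.1 hk.2).2]
      rw [Nat.cast_one, div_pow, one_pow, one_div, ← inv_pow]
    have e3 : ∑ k ∈ Finset.Ioc m2 (p-1), (((3*k/p : ℕ) : ℚ_[p]) / ((3*k % p : ℕ) : ℚ_[p]))^2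
        = 4 * S2v := by
      rw [← hT2S2, Finset.mul_sum]
      apply Finset.sum_congr rfl
      intro k hk
      rw [Finset.mem_Ioc] at hk
      rw [(htr3 k hk.1 hk.2).1, (htr3 k hk.1 hk.2).2]
      rw [div_eq_mul_inv, mul_pow]
      push_cast
      ring
    rw [e1, e2, e3]; ring
  -- norms of s1, s2
  have hnorm_r : ∀ k ∈ Finset.Ioc 0 (p-1), ‖((3*k % p : ℕ) : ℚ_[p])‖ = 1 := by
    intro k hk
    have := mem_Ioc_mul_mod hnd3 hk
    rw [Finset.mem_Ioc] at this
    exact norm_nat_unit this.1 (by omega)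
  have hs1n : ‖s1‖ ≤ 1 := by
    rw [hs1]
    apply sum_norm_le zero_le_one
    intro k hk
    rw [norm_div, hnorm_r k hk, div_one]
    exact norm_nat_le_one _
  have hs2n : ‖s2‖ ≤ 1 := by
    rw [hs2]
    apply sum_norm_le zero_le_one
    intro k hk
    rw [norm_pow]
    have : ‖((3*k/p : ℕ) : ℚ_[p]) / ((3*k % p : ℕ) : ℚ_[p])‖ ≤ 1 := by
      rw [norm_div, hnorm_r k hk, div_one]; exact norm_nat_le_one _
    calc ‖((3*k/p : ℕ) : ℚ_[p]) / ((3*k % p : ℕ) : ℚ_[p])‖^2 ≤ 1^2 :=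
        pow_le_pow_left₀ (norm_nonneg _) this 2
      _ = 1 := one_pow 2
  -- the Fermat quotient expansion
  have hq' : (3:ℚ_[p])^(p-1) = 1 + (p:ℚ_[p]) * (q:ℚ_[p]) := by
    have hqq : (q:ℚ_[p]) = ((3:ℚ_[p])^(p-1) - 1) / (p:ℚ_[p]) := by
      rw [hq]; push_cast; ring
    rw [hqq]
    field_simp
    ring
  have hxk : ∀ k ∈ Finset.Ioc 0 (p-1),
      ‖(p:ℚ_[p]) * ((3*k/p : ℕ) : ℚ_[p]) / ((3*k % p : ℕ) : ℚ_[p])‖ ≤ (p:ℝ)⁻¹ := by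
    intro k hk
    rw [norm_div, hnorm_r k hk, div_one, norm_mul, Padic.norm_p]
    calc (p:ℝ)⁻¹ * ‖((3*k/p : ℕ) : ℚ_[p])‖ ≤ (p:ℝ)⁻¹ * 1 := by
          gcongr
          exact norm_nat_le_one _
      _ = (p:ℝ)⁻¹ := mul_one _
  have hexp := prod_expansion (norm_two (p := p) (by omega)) (Finset.Ioc 0 (p-1))
    (fun k => (p:ℚ_[p]) * ((3*k/p : ℕ) : ℚ_[p]) / ((3*k % p : ℕ) : ℚ_[p])) ((p:ℝ)⁻¹)
    hε0 hε1 hxk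
  rw [← prod_identity h3] at hexp
  have hX : ∑ k ∈ Finset.Ioc 0 (p-1),
      (p:ℚ_[p]) * ((3*k/p : ℕ) : ℚ_[p]) / ((3*k % p : ℕ) : ℚ_[p]) = (p:ℚ_[p]) * s1 := by
    rw [hs1, Finset.mul_sum]
    exact Finset.sum_congr rfl (fun k _ => by rw [mul_div_assoc])
  have hX2 : ∑ k ∈ Finset.Ioc 0 (p-1),
      ((p:ℚ_[p]) * ((3*k/p : ℕ) : ℚ_[p]) / ((3*k % p : ℕ) : ℚ_[p]))^2 = (p:ℚ_[p])^2 * s2 := by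
    rw [hs2, Finset.mul_sum]
    exact Finset.sum_congr rfl (fun k _ => by rw [mul_div_assoc, mul_pow])
  rw [hX, hX2, hq'] at hexp
  have hAfact : (1 + (p:ℚ_[p]) * q) - (1 + (p:ℚ_[p]) * s1 + (((p:ℚ_[p]) * s1)^2 - (p:ℚ_[p])^2 * s2)/2)
      = (p:ℚ_[p]) * ((q:ℚ_[p]) - s1 - (p:ℚ_[p]) * (s1^2 - s2)/2) := by ring
  rw [hAfact, norm_mul, Padic.norm_p] at hexp
  have hAn : ‖(q:ℚ_[p]) - s1 - (p:ℚ_[p]) * (s1^2 - s2)/2‖ ≤ ((p:ℝ)⁻¹)^2 := by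
    have hppos : (0:ℝ) < (p:ℝ)⁻¹ := by positivity
    have h3' : ((p:ℝ)⁻¹)^3 = (p:ℝ)⁻¹ * ((p:ℝ)⁻¹)^2 := by ring
    rw [h3'] at hexp
    exact le_of_mul_le_mul_left hexp hppos
  -- |q| ≤ 1 and |q - s1| ≤ 1/p
  have hmid : ‖(p:ℚ_[p]) * (s1^2 - s2)/2‖ ≤ (p:ℝ)⁻¹ := by
    rw [norm_div, norm_two (p := p) (by omega), div_one, norm_mul, Padic.norm_p]
    have hd : ‖s1^2 - s2‖ ≤ 1 := norm_sub_le'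
      (by rw [norm_pow]; calc ‖s1‖^2 ≤ 1^2 := pow_le_pow_left₀ (norm_nonneg _) hs1n 2
            _ = 1 := one_pow 2) hs2n
    calc (p:ℝ)⁻¹ * ‖s1^2 - s2‖ ≤ (p:ℝ)⁻¹ * 1 := by gcongr
      _ = (p:ℝ)⁻¹ := mul_one _
  have hDn : ‖(q:ℚ_[p]) - s1‖ ≤ (p:ℝ)⁻¹ := by
    have : (q:ℚ_[p]) - s1 = ((q:ℚ_[p]) - s1 - (p:ℚ_[p]) * (s1^2 - s2)/2)
        + (p:ℚ_[p]) * (s1^2 - s2)/2 := by ring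
    rw [this]
    apply norm_add_le' _ hmid
    calc ‖(q:ℚ_[p]) - s1 - (p:ℚ_[p]) * (s1^2 - s2)/2‖ ≤ ((p:ℝ)⁻¹)^2 := hAn
      _ ≤ (p:ℝ)⁻¹ := by
          calc ((p:ℝ)⁻¹)^2 = (p:ℝ)⁻¹ * (p:ℝ)⁻¹ := sq _
            _ ≤ 1 * (p:ℝ)⁻¹ := by gcongr
            _ = (p:ℝ)⁻¹ := one_mul _
  have hqn : ‖(q:ℚ_[p])‖ ≤ 1 := by
    have : (q:ℚ_[p]) = ((q:ℚ_[p]) - s1) + s1 := by ring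
    rw [this]
    exact norm_add_le' (hDn.trans hε1) hs1n
  -- pairing bound for Mv
  have hMrefl : Mv = ∑ k ∈ Finset.Ioc m m2, ((2*p - 3*k : ℕ) : ℚ_[p])⁻¹ := by
    rw [hMv]
    apply sum_reflect (by omega) (by omega)
    intro k hk
    rw [Finset.mem_Ioc] at hk
    have harg : 2*p - 3*(p - k) = 3*k - p := by omega
    rw [harg]
  have hBn : ‖2*Mv + (p:ℚ_[p])*M2v‖ ≤ ((p:ℝ)⁻¹)^2 := by
    have hcomb : 2*Mv + (p:ℚ_[p])*M2v = ∑ k ∈ Finset.Ioc m m2,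
        (((3*k - p : ℕ) : ℚ_[p])⁻¹ + ((2*p - 3*k : ℕ) : ℚ_[p])⁻¹
          + (p:ℚ_[p]) * (((3*k - p : ℕ) : ℚ_[p])⁻¹)^2) := by
      rw [two_mul]
      nth_rewrite 2 [hMrefl]
      rw [hMv, hM2v, Finset.mul_sum, ← Finset.sum_add_distrib, ← Finset.sum_add_distrib]
    rw [hcomb]
    apply sum_norm_le (by positivity)
    intro k hk
    rw [Finset.mem_Ioc] at hk
    obtain ⟨ha1, ha2⟩ := hden1 k hk.1 hk.2
    obtain ⟨hb1, hb2⟩ := hden1' k hk.1 hk.2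
    have hab : ((3*k - p : ℕ) : ℚ_[p]) + ((2*p - 3*k : ℕ) : ℚ_[p]) = (p:ℚ_[p]) := by
      rw [← Nat.cast_add, show (3*k - p) + (2*p - 3*k) = p by omega]
    have hkey : ((3*k - p : ℕ) : ℚ_[p])⁻¹ + ((2*p - 3*k : ℕ) : ℚ_[p])⁻¹
        + (p:ℚ_[p]) * (((3*k - p : ℕ) : ℚ_[p])⁻¹)^2
        = (p:ℚ_[p])^2 * ((((3*k - p : ℕ) : ℚ_[p]))^2 * ((2*p - 3*k : ℕ) : ℚ_[p]))⁻¹ := by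
      rw [← hab]
      field_simp
      ring
    rw [hkey, norm_mul, norm_pow, Padic.norm_p, norm_inv, norm_mul, norm_pow, ha1, hb1]
    norm_num
  -- the inverse-square sums
  set A2 := ∑ k ∈ Finset.Ioc 0 m, (((k:ℕ) : ℚ_[p])⁻¹)^2 with hA2
  set B2 := ∑ k ∈ Finset.Ioc m m2, (((k:ℕ) : ℚ_[p])⁻¹)^2 with hB2
  set C2 := ∑ k ∈ Finset.Ioc m2 (p-1), (((k:ℕ) : ℚ_[p])⁻¹)^2 with hC2
  have hSign : ‖A2 + B2 + C2‖ ≤ (p:ℝ)⁻¹ := by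
    rw [hA2, hB2, hC2, ← hsplit (fun k => (((k:ℕ) : ℚ_[p])⁻¹)^2)]
    exact sum_inv_sq_norm h3
  have hkunit : ∀ k, 0 < k → k ≤ p - 1 → ‖((k:ℕ) : ℚ_[p])‖ = 1 ∧ ((k:ℕ) : ℚ_[p]) ≠ 0 := by
    intro k h1 h2
    exact ⟨norm_nat_unit h1 (by omega), nat_unit_ne_zero h1 (by omega)⟩
  have hACn : ‖A2 - C2‖ ≤ (p:ℝ)⁻¹ := by
    have hC2' : C2 = ∑ k ∈ Finset.Ioc 0 m, (((p - k : ℕ) : ℚ_[p])⁻¹)^2 := by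
      rw [hC2]
      apply sum_reflect (by omega) (by omega)
      intro k hk
      rw [Finset.mem_Ioc] at hk
      have harg : p - (p - k) = k := by omega
      rw [harg]
    rw [hC2', hA2, ← Finset.sum_sub_distrib]
    apply sum_norm_le hε0
    intro k hk
    rw [Finset.mem_Ioc] at hk
    obtain ⟨ha1, ha2⟩ := hkunit k hk.1 (by omega)
    have hb0 : 0 < p - k := by omega
    have hbp : p - k < p := by omega
    have hb1 : ‖((p - k : ℕ) : ℚ_[p])‖ = 1 := norm_nat_unit hb0 hbp
    have hb2 : ((p - k : ℕ) : ℚ_[p]) ≠ 0 := nat_unit_ne_zero hb0 hbp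
    have hab : ((k:ℕ) : ℚ_[p]) + ((p - k : ℕ) : ℚ_[p]) = (p:ℚ_[p]) := by
      rw [← Nat.cast_add, show k + (p - k) = p by omega]
    have hkey : (((k:ℕ) : ℚ_[p])⁻¹)^2 - (((p - k : ℕ) : ℚ_[p])⁻¹)^2
        = (p:ℚ_[p]) * (((p - k : ℕ) : ℚ_[p]) - ((k:ℕ) : ℚ_[p]))
          * ((((k:ℕ) : ℚ_[p]))^2 * (((p - k : ℕ) : ℚ_[p]))^2)⁻¹ := by
      rw [← hab]
      field_simp
      ring
    rw [hkey, norm_mul, norm_mul, Padic.norm_p, norm_inv, norm_mul, norm_pow, norm_pow,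
      ha1, hb1]
    have hsub : ‖((p - k : ℕ) : ℚ_[p]) - ((k:ℕ) : ℚ_[p])‖ ≤ 1 := norm_sub_le' hb1.le ha1.le
    calc (p:ℝ)⁻¹ * ‖((p - k : ℕ) : ℚ_[p]) - ((k:ℕ) : ℚ_[p])‖ * (1^2 * 1^2)⁻¹
        = (p:ℝ)⁻¹ * ‖((p - k : ℕ) : ℚ_[p]) - ((k:ℕ) : ℚ_[p])‖ := by norm_num
      _ ≤ (p:ℝ)⁻¹ * 1 := by gcongr
      _ = (p:ℝ)⁻¹ := mul_one _
  have h9inv : ∀ kq : ℚ_[p], (9:ℚ_[p])⁻¹ * (kq⁻¹)^2 = ((3 * kq)⁻¹)^2 := by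
    intro kq
    have h39 : ((3:ℚ_[p])⁻¹)^2 = (9:ℚ_[p])⁻¹ := by
      rw [inv_pow]; norm_num
    rw [mul_inv, mul_pow, h39]
  have hM2B2n : ‖M2v - (9:ℚ_[p])⁻¹ * B2‖ ≤ (p:ℝ)⁻¹ := by
    rw [hM2v, hB2, Finset.mul_sum, ← Finset.sum_sub_distrib]
    apply sum_norm_le hε0
    intro k hk
    rw [Finset.mem_Ioc] at hk
    obtain ⟨ha1, ha2⟩ := hden1 k hk.1 hk.2
    obtain ⟨hk1, hk2⟩ := hkunit k (by omega) (by omega)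
    rw [h9inv]
    have hbne : (3:ℚ_[p]) * ((k:ℕ) : ℚ_[p]) ≠ 0 := mul_ne_zero (by norm_num) hk2
    have hbnorm : ‖(3:ℚ_[p]) * ((k:ℕ) : ℚ_[p])‖ = 1 := by
      rw [norm_mul, norm_three h3, hk1, one_mul]
    have hab : (3:ℚ_[p]) * ((k:ℕ) : ℚ_[p]) = ((3*k - p : ℕ) : ℚ_[p]) + (p:ℚ_[p]) := by
      have harg : (3*k - p) + p = 3*k := by omega
      calc (3:ℚ_[p]) * ((k:ℕ) : ℚ_[p]) = ((3*k:ℕ) : ℚ_[p]) := by push_cast; ring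
        _ = ((3*k - p + p : ℕ) : ℚ_[p]) := by rw [harg]
        _ = ((3*k - p : ℕ) : ℚ_[p]) + (p:ℚ_[p]) := by push_cast; ring
    have hkey : (((3*k - p : ℕ) : ℚ_[p])⁻¹)^2 - (((3:ℚ_[p]) * ((k:ℕ) : ℚ_[p]))⁻¹)^2
        = (p:ℚ_[p]) * ((3:ℚ_[p]) * ((k:ℕ) : ℚ_[p]) + ((3*k - p : ℕ) : ℚ_[p]))
          * ((((3*k - p : ℕ) : ℚ_[p]))^2 * ((3:ℚ_[p]) * ((k:ℕ) : ℚ_[p]))^2)⁻¹ := by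
      rw [hab] at hbne ⊢
      field_simp
      ring
    rw [hkey, norm_mul, norm_mul, Padic.norm_p, norm_inv, norm_mul, norm_pow, norm_pow,
      ha1, hbnorm]
    have hsum1 : ‖(3:ℚ_[p]) * ((k:ℕ) : ℚ_[p]) + ((3*k - p : ℕ) : ℚ_[p])‖ ≤ 1 :=
      norm_add_le' hbnorm.le ha1.le
    calc (p:ℝ)⁻¹ * ‖(3:ℚ_[p]) * ((k:ℕ) : ℚ_[p]) + ((3*k - p : ℕ) : ℚ_[p])‖ * (1^2 * 1^2)⁻¹
        = (p:ℝ)⁻¹ * ‖(3:ℚ_[p]) * ((k:ℕ) : ℚ_[p]) + ((3*k - p : ℕ) : ℚ_[p])‖ := by norm_num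
      _ ≤ (p:ℝ)⁻¹ * 1 := by gcongr
      _ = (p:ℝ)⁻¹ := mul_one _
  have hS2A2n : ‖S2v - (9:ℚ_[p])⁻¹ * A2‖ ≤ (p:ℝ)⁻¹ := by
    rw [hS2v, hA2, Finset.mul_sum, ← Finset.sum_sub_distrib]
    apply sum_norm_le hε0
    intro k hk
    rw [Finset.mem_Ioc] at hk
    obtain ⟨ha1, ha2⟩ := hden0 k hk.1 hk.2
    obtain ⟨hk1, hk2⟩ := hkunit k (by omega) (by omega)
    rw [h9inv]
    have hbne : (3:ℚ_[p]) * ((k:ℕ) : ℚ_[p]) ≠ 0 := mul_ne_zero (by norm_num) hk2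
    have hbnorm : ‖(3:ℚ_[p]) * ((k:ℕ) : ℚ_[p])‖ = 1 := by
      rw [norm_mul, norm_three h3, hk1, one_mul]
    have hab : ((p - 3*k : ℕ) : ℚ_[p]) + (3:ℚ_[p]) * ((k:ℕ) : ℚ_[p]) = (p:ℚ_[p]) := by
      have harg : (p - 3*k) + 3*k = p := by omega
      calc ((p - 3*k : ℕ) : ℚ_[p]) + (3:ℚ_[p]) * ((k:ℕ) : ℚ_[p])
          = ((p - 3*k + 3*k : ℕ) : ℚ_[p]) := by push_cast; ring
        _ = (p:ℚ_[p]) := by rw [harg]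
    have hkey : (((p - 3*k : ℕ) : ℚ_[p])⁻¹)^2 - (((3:ℚ_[p]) * ((k:ℕ) : ℚ_[p]))⁻¹)^2
        = (p:ℚ_[p]) * ((3:ℚ_[p]) * ((k:ℕ) : ℚ_[p]) - ((p - 3*k : ℕ) : ℚ_[p]))
          * ((((p - 3*k : ℕ) : ℚ_[p]))^2 * ((3:ℚ_[p]) * ((k:ℕ) : ℚ_[p]))^2)⁻¹ := by
      rw [← hab]
      field_simp
      ring
    rw [hkey, norm_mul, norm_mul, Padic.norm_p, norm_inv, norm_mul, norm_pow, norm_pow,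
      ha1, hbnorm]
    have hsum1 : ‖(3:ℚ_[p]) * ((k:ℕ) : ℚ_[p]) - ((p - 3*k : ℕ) : ℚ_[p])‖ ≤ 1 :=
      norm_sub_le' hbnorm.le ha1.le
    calc (p:ℝ)⁻¹ * ‖(3:ℚ_[p]) * ((k:ℕ) : ℚ_[p]) - ((p - 3*k : ℕ) : ℚ_[p])‖ * (1^2 * 1^2)⁻¹
        = (p:ℝ)⁻¹ * ‖(3:ℚ_[p]) * ((k:ℕ) : ℚ_[p]) - ((p - 3*k : ℕ) : ℚ_[p])‖ := by norm_num
      _ ≤ (p:ℝ)⁻¹ * 1 := by gcongr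
      _ = (p:ℝ)⁻¹ := mul_one _
  have hCn : ‖M2v + 2*S2v‖ ≤ (p:ℝ)⁻¹ := by
    have hid : M2v + 2*S2v = (M2v - (9:ℚ_[p])⁻¹*B2) + 2*(S2v - (9:ℚ_[p])⁻¹*A2)
        + (9:ℚ_[p])⁻¹*((A2+B2+C2) + (A2 - C2)) := by ring
    rw [hid]
    apply norm_add_le' (norm_add_le' hM2B2n ?_) ?_
    · rw [norm_mul, norm_two (p := p) (by omega), one_mul]
      exact hS2A2n
    · rw [norm_mul, norm_inv, norm_nine h3, inv_one, one_mul]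
      exact norm_add_le' hSign hACn
  -- final assembly
  have hfinal : Sv - ((1/2)*(q:ℚ_[p]) - (1/4)*(p:ℚ_[p])*(q:ℚ_[p])^2)
      = -((q:ℚ_[p]) - s1 - (p:ℚ_[p]) * (s1^2 - s2)/2)/2 - (2*Mv + (p:ℚ_[p])*M2v)/4
        + (p:ℚ_[p])*(M2v + 2*S2v)/2 + (p:ℚ_[p])*(((q:ℚ_[p]) - s1)*((q:ℚ_[p]) + s1))/4 := by
    rw [hs1split, hs2split]
    ring
  have hfn : ‖Sv - ((1/2)*(q:ℚ_[p]) - (1/4)*(p:ℚ_[p])*(q:ℚ_[p])^2)‖ ≤ ((p:ℝ)⁻¹)^2 := by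
    rw [hfinal]
    have n1 : ‖-((q:ℚ_[p]) - s1 - (p:ℚ_[p]) * (s1^2 - s2)/2)/2‖ ≤ ((p:ℝ)⁻¹)^2 := by
      rw [norm_div, norm_neg, norm_two (p := p) (by omega), div_one]
      exact hAn
    have n2 : ‖(2*Mv + (p:ℚ_[p])*M2v)/4‖ ≤ ((p:ℝ)⁻¹)^2 := by
      rw [norm_div, norm_four h3, div_one]
      exact hBn
    have n3 : ‖(p:ℚ_[p])*(M2v + 2*S2v)/2‖ ≤ ((p:ℝ)⁻¹)^2 := by
      rw [norm_div, norm_two (p := p) (by omega), div_one, norm_mul, Padic.norm_p]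
      calc (p:ℝ)⁻¹ * ‖M2v + 2*S2v‖ ≤ (p:ℝ)⁻¹ * (p:ℝ)⁻¹ := by gcongr
        _ = ((p:ℝ)⁻¹)^2 := (sq _).symm
    have n4 : ‖(p:ℚ_[p])*(((q:ℚ_[p]) - s1)*((q:ℚ_[p]) + s1))/4‖ ≤ ((p:ℝ)⁻¹)^2 := by
      rw [norm_div, norm_four h3, div_one, norm_mul, Padic.norm_p, norm_mul]
      have hqs : ‖(q:ℚ_[p]) + s1‖ ≤ 1 := norm_add_le' hqn hs1n
      calc (p:ℝ)⁻¹ * (‖(q:ℚ_[p]) - s1‖ * ‖(q:ℚ_[p]) + s1‖)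
          ≤ (p:ℝ)⁻¹ * ((p:ℝ)⁻¹ * 1) := by gcongr
        _ = ((p:ℝ)⁻¹)^2 := by ring
    exact norm_add_le' (norm_add_le' (norm_sub_le' n1 n2) n3) n4
  -- rewrite the goal sum
  have hIccIoc : Finset.Icc 1 m = Finset.Ioc 0 m := by
    ext x
    simp only [Finset.mem_Icc, Finset.mem_Ioc]
    omega
  have hSconv : (∑ k ∈ Finset.Icc 1 m, (1:ℚ_[p])/((p:ℚ_[p]) - 3*(k:ℚ_[p]))) = Sv := by
    rw [hIccIoc, hSv]
    apply Finset.sum_congr rfl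
    intro k hk
    rw [Finset.mem_Ioc] at hk
    have h3k : 3*k ≤ p := by omega
    rw [one_div]
    congr 1
    rw [Nat.cast_sub h3k]
    push_cast
    ring
  rw [hSconv]
  refine ⟨⟨(Sv - ((1/2)*(q:ℚ_[p]) - (1/4)*(p:ℚ_[p])*(q:ℚ_[p])^2)) / (p:ℚ_[p])^2, ?_⟩, ?_⟩
  · rw [norm_div, norm_pow, Padic.norm_p, div_le_one (by positivity)]
    exact hfn
  · show _ = (p:ℚ_[p])^2 *
      ((Sv - ((1/2)*(q:ℚ_[p]) - (1/4)*(p:ℚ_[p])*(q:ℚ_[p])^2)) / (p:ℚ_[p])^2)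
    rw [mul_div_cancel₀ _ (pow_ne_zero 2 hpne)]
end

section
/- Let p > 3 be prime and for each i ≥ 1 set V_{p,i} = p·B_{i(p-1)}/(p-1) - 1 ∈ ℤ_p. Then V_{p,i} ≡ 0 (mod p) for all i ≥ 1; moreover 2V_{p,1} - V_{p,2} ≡ 0 (mod p^2), 3V_{p,2} - 2V_{p,3} ≡ 0 (mod p^2), and 3V_{p,1} - 3V_{p,2} + V_{p,3} ≡ 0 (mod p^3). -/
open Finset IsUltrametricDist

namespace BernV

variable {p : ℕ} [hp : Fact p.Prime]

lemma add_four_le_pow {v : ℕ} (hv : 1 ≤ v) : v + 4 ≤ 5 ^ v := by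
  induction v with
  | zero => omega
  | succ n ih =>
    rcases Nat.eq_zero_or_pos n with h | h
    · subst h; norm_num
    · have h1 := ih h
      have h2 : (5:ℕ) ^ (n+1) = 5 * 5 ^ n := by ring
      omega

lemma five_le (h3 : 3 < p) : 5 ≤ p := by
  have h4 : p ≠ 4 := by rintro rfl; exact (by decide : ¬ Nat.Prime 4) hp.out
  omega

lemma min_add_val_le (h3 : 3 < p) {s : ℕ} (hs : 2 ≤ s) : min s 4 + padicValNat p s ≤ s := by
  have hd : p ^ padicValNat p s ∣ s := pow_padicValNat_dvd
  have hle : p ^ padicValNat p s ≤ s := Nat.le_of_dvd (by omega) hd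
  rcases Nat.eq_zero_or_pos (padicValNat p s) with h | h
  · have h0 := min_le_left s 4
    omega
  · have h5 : 5 ^ padicValNat p s ≤ p ^ padicValNat p s := Nat.pow_le_pow_left (five_le h3) _
    have h6 := add_four_le_pow h
    have h7 := min_le_right s 4
    have h8 : 5 ^ padicValNat p s ≤ s := le_trans h5 hle
    omega

lemma norm_natCast_eq {s : ℕ} (hs : s ≠ 0) :
    ‖(s : ℚ_[p])‖ = (p : ℝ) ^ (-(padicValNat p s : ℤ)) := by
  rw [Padic.norm_eq_zpow_neg_valuation (by exact_mod_cast hs), Padic.valuation_natCast]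

lemma norm_pow_div_le (h3 : 3 < p) {s : ℕ} (hs : 2 ≤ s) :
    ‖(p : ℚ_[p]) ^ s / (s : ℚ_[p])‖ ≤ (p : ℝ) ^ (-((min s 4 : ℕ) : ℤ)) := by
  have hp1 : (1:ℝ) < p := by exact_mod_cast hp.out.one_lt
  rw [norm_div, norm_pow, Padic.norm_p, norm_natCast_eq (by omega)]
  rw [← zpow_neg_one, ← zpow_natCast ((p:ℝ) ^ (-1:ℤ)) s, ← zpow_mul, ← zpow_sub₀ (by positivity)]
  apply zpow_le_zpow_right₀ hp1.le
  have := min_add_val_le h3 hs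
  omega

lemma sum_range_eq_univ (f : ZMod p → ZMod p) :
    ∑ k ∈ range p, f (k : ZMod p) = ∑ x : ZMod p, f x := by
  haveI : NeZero p := ⟨hp.out.pos.ne'⟩
  refine Finset.sum_nbij' (fun k => (k : ZMod p)) (fun x => x.val) ?_ ?_ ?_ ?_ ?_
  · intro a _; exact mem_univ _
  · intro x _; exact mem_range.mpr (ZMod.val_lt x)
  · intro a ha; exact ZMod.val_cast_of_lt (mem_range.mp ha)
  · intro x _; exact ZMod.natCast_zmod_val x
  · intro a _; rfl

lemma zmod_sum_pow (m : ℕ) (hm : m ≠ 0) :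
    ((∑ k ∈ range p, k ^ m : ℕ) : ZMod p) = if (p - 1) ∣ m then -1 else 0 := by
  classical
  push_cast
  rw [sum_range_eq_univ (fun x => x ^ m)]
  have hzero : (0 : ZMod p) ^ m = 0 := zero_pow hm
  let φ : (ZMod p)ˣ ↪ ZMod p := ⟨fun x => x, Units.val_injective⟩
  have hmap : univ.map φ = univ \ {0} := by
    ext x
    simpa only [mem_map, mem_univ, Function.Embedding.coeFn_mk, true_and, mem_sdiff,
      mem_singleton, φ] using
      (show (∃ a : (ZMod p)ˣ, (a : ZMod p) = x) ↔ ¬x = 0 from isUnit_iff_ne_zero)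
  have h1 : ∑ x : ZMod p, x ^ m = ∑ x ∈ univ \ {0}, x ^ m + 0 ^ m := by
    rw [Finset.sum_eq_sum_sdiff_singleton_add (mem_univ (0 : ZMod p))]
  have h2 : ∑ x ∈ univ \ {0}, x ^ m = ∑ x : (ZMod p)ˣ, ((x : ZMod p)) ^ m := by
    rw [← hmap, Finset.sum_map]
    rfl
  rw [h1, h2, hzero, add_zero]
  have := FiniteField.sum_pow_units (ZMod p) m
  rwa [ZMod.card] at this

lemma choose_identity {m j : ℕ} (hj : j ≤ m) :
    (m + 1) * m.choose j = (m + 1).choose j * (m + 1 - j) := by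
  have h1 := Nat.add_one_mul_choose_eq m (m - j)
  rw [Nat.choose_symm hj] at h1
  have h2 : (m + 1).choose (m - j + 1) = (m + 1).choose j := by
    rw [← Nat.choose_symm (by omega : m - j + 1 ≤ m + 1)]
    congr 1
    omega
  rw [h2] at h1
  rw [h1]
  congr 1
  omega

lemma faulhaber' (n : ℕ) {m : ℕ} (hm : 1 ≤ m) :
    (n : ℚ) * bernoulli m = (∑ k ∈ range n, (k : ℚ) ^ m)
      - ∑ j ∈ range m, bernoulli j * (m.choose j : ℕ) * (n : ℚ) ^ (m + 1 - j)
          / ((m + 1 - j : ℕ) : ℚ) := by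
  have key := _root_.sum_range_pow n m
  have hterm : ∀ j ∈ range (m + 1),
      bernoulli j * ((m + 1).choose j : ℕ) * (n : ℚ) ^ (m + 1 - j) / ((m : ℚ) + 1)
        = bernoulli j * (m.choose j : ℕ) * (n : ℚ) ^ (m + 1 - j) / ((m + 1 - j : ℕ) : ℚ) := by
    intro j hj
    have hj' : j ≤ m := by simpa [Nat.lt_succ_iff] using hj
    have hident := choose_identity hj'
    have h1 : ((m : ℚ) + 1) ≠ 0 := by positivity
    have h2 : ((m + 1 - j : ℕ) : ℚ) ≠ 0 := by
      have : 0 < m + 1 - j := by omega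
      exact_mod_cast this.ne'
    have hc : ((m : ℚ) + 1) * (m.choose j : ℚ) = ((m + 1).choose j : ℚ) * ((m + 1 - j : ℕ) : ℚ) := by
      exact_mod_cast congrArg (fun x : ℕ => (x : ℚ)) hident
    rw [div_eq_div_iff h1 h2]
    linear_combination (-(bernoulli j * (n : ℚ) ^ (m + 1 - j))) * hc
  rw [Finset.sum_congr rfl hterm] at key
  rw [Finset.sum_range_succ] at key
  have hlast : bernoulli m * (m.choose m : ℕ) * (n : ℚ) ^ (m + 1 - m) / ((m + 1 - m : ℕ) : ℚ)
      = (n : ℚ) * bernoulli m := by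
    have : m + 1 - m = 1 := by omega
    simp [this, Nat.choose_self]
    ring
  rw [hlast] at key
  linarith [key]

lemma faulhaber_padic {m : ℕ} (hm : 1 ≤ m) :
    (p : ℚ_[p]) * ((bernoulli m : ℚ) : ℚ_[p]) =
      ((∑ k ∈ range p, k ^ m : ℕ) : ℚ_[p]) -
      ∑ j ∈ range m, ((bernoulli j : ℚ) : ℚ_[p]) * (m.choose j : ℚ_[p])
        * (p : ℚ_[p]) ^ (m + 1 - j) / ((m + 1 - j : ℕ) : ℚ_[p]) := by
  have key := faulhaber' p hm
  have h2 := congrArg (fun q : ℚ => (q : ℚ_[p])) key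
  push_cast at h2 ⊢
  convert h2 using 2

lemma norm_term_le (h3 : 3 < p) {m j : ℕ} (hj : j < m) {C : ℝ}
    (hC : ‖((bernoulli j : ℚ) : ℚ_[p])‖ ≤ C) (hC0 : 0 ≤ C) :
    ‖((bernoulli j : ℚ) : ℚ_[p]) * (m.choose j : ℚ_[p]) * (p : ℚ_[p]) ^ (m + 1 - j)
        / ((m + 1 - j : ℕ) : ℚ_[p])‖ ≤ C * (p : ℝ) ^ (-((min (m + 1 - j) 4 : ℕ) : ℤ)) := by
  have hs : 2 ≤ m + 1 - j := by omega
  have h1 : ‖((m.choose j : ℕ) : ℚ_[p])‖ ≤ 1 := by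
    have := Padic.norm_int_le_one (p := p) (m.choose j : ℤ)
    simpa using this
  have h2 := norm_pow_div_le (p := p) h3 hs
  calc ‖((bernoulli j : ℚ) : ℚ_[p]) * (m.choose j : ℚ_[p]) * (p : ℚ_[p]) ^ (m + 1 - j)
        / ((m + 1 - j : ℕ) : ℚ_[p])‖
      = ‖((bernoulli j : ℚ) : ℚ_[p])‖ * ‖((m.choose j : ℕ) : ℚ_[p])‖
          * ‖(p : ℚ_[p]) ^ (m + 1 - j) / ((m + 1 - j : ℕ) : ℚ_[p])‖ := by
        rw [mul_div_assoc, norm_mul, norm_mul]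
    _ ≤ C * 1 * ((p : ℝ) ^ (-((min (m + 1 - j) 4 : ℕ) : ℤ))) :=
        mul_le_mul (mul_le_mul hC h1 (norm_nonneg _) hC0) h2 (norm_nonneg _)
          (mul_nonneg hC0 zero_le_one)
    _ = C * (p : ℝ) ^ (-((min (m + 1 - j) 4 : ℕ) : ℤ)) := by ring

lemma nsub_le_max (a b : ℚ_[p]) : ‖a - b‖ ≤ max ‖a‖ ‖b‖ := by
  rw [sub_eq_add_neg]
  simpa using norm_add_le_max a (-b)

lemma bern_norm (h3 : 3 < p) : ∀ m : ℕ,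
    ‖((bernoulli m : ℚ) : ℚ_[p])‖ ≤ p ∧
    (¬ ((p - 1) ∣ m ∧ m ≠ 0) → ‖((bernoulli m : ℚ) : ℚ_[p])‖ ≤ 1) := by
  have hp1 : (1:ℝ) < p := by exact_mod_cast hp.out.one_lt
  intro m
  induction m using Nat.strong_induction_on with
  | _ m ih =>
    rcases Nat.eq_zero_or_pos m with rfl | hm
    · constructor
      · simp only [bernoulli_zero, Rat.cast_one, norm_one]
        exact hp1.le
      · intro _; simp
    -- m ≥ 1
    have key := faulhaber_padic (p := p) hm
    -- bound on the error sum
    have hE : ‖∑ j ∈ range m, ((bernoulli j : ℚ) : ℚ_[p]) * (m.choose j : ℚ_[p])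
        * (p : ℚ_[p]) ^ (m + 1 - j) / ((m + 1 - j : ℕ) : ℚ_[p])‖ ≤ (p : ℝ) ^ (-1 : ℤ) := by
      apply norm_sum_le_of_forall_le_of_nonneg (by positivity)
      intro j hj
      have hj' : j < m := mem_range.mp hj
      have hb := (ih j hj').1
      have := norm_term_le h3 hj' hb (by positivity)
      refine le_trans this ?_
      have hmin : 2 ≤ min (m + 1 - j) 4 := by
        have : 2 ≤ m + 1 - j := by omega
        omega
      calc (p:ℝ) * (p : ℝ) ^ (-((min (m + 1 - j) 4 : ℕ) : ℤ))
          ≤ (p:ℝ) ^ (1:ℤ) * (p : ℝ) ^ (-(2:ℤ)) := by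
            apply mul_le_mul ?_ ?_ (by positivity) (by positivity)
            · simp
            · apply zpow_le_zpow_right₀ hp1.le; omega
        _ = (p : ℝ) ^ (-1 : ℤ) := by
            rw [← zpow_add₀ (by positivity)]
            norm_num
    have hS1 : ‖((∑ k ∈ range p, k ^ m : ℕ) : ℚ_[p])‖ ≤ 1 := by
      have := Padic.norm_int_le_one (p := p) ((∑ k ∈ range p, k ^ m : ℕ) : ℤ)
      simpa using this
    constructor
    · -- crude bound
      have hnorm : ‖(p : ℚ_[p]) * ((bernoulli m : ℚ) : ℚ_[p])‖ ≤ 1 := by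
        rw [key]
        refine le_trans (nsub_le_max _ _) ?_
        apply max_le hS1
        refine le_trans hE ?_
        rw [zpow_neg_one]
        exact inv_le_one_of_one_le₀ hp1.le
      rw [norm_mul, Padic.norm_p] at hnorm
      rw [← mul_le_mul_iff_right₀ (a := (p:ℝ)⁻¹) (by positivity)]
      calc (p:ℝ)⁻¹ * ‖((bernoulli m : ℚ) : ℚ_[p])‖ ≤ 1 := hnorm
        _ = (p:ℝ)⁻¹ * p := by field_simp
    · intro hnd
      have hdvd : ¬ (p - 1) ∣ m := by
        intro h; exact hnd ⟨h, hm.ne'⟩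
      -- S ≡ 0 mod p
      have hSz : ((∑ k ∈ range p, k ^ m : ℕ) : ZMod p) = 0 := by
        rw [zmod_sum_pow m hm.ne', if_neg hdvd]
      have hSdvd : (p : ℤ) ∣ ((∑ k ∈ range p, k ^ m : ℕ) : ℤ) := by
        rwa [← ZMod.intCast_zmod_eq_zero_iff_dvd, Int.cast_natCast]
      have hS2 : ‖((∑ k ∈ range p, k ^ m : ℕ) : ℚ_[p])‖ ≤ (p : ℝ) ^ (-1 : ℤ) := by
        have := (Padic.norm_int_le_pow_iff_dvd (p := p)
          ((∑ k ∈ range p, k ^ m : ℕ) : ℤ) 1).mpr (by simpa using hSdvd)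
        simpa using this
      have hnorm : ‖(p : ℚ_[p]) * ((bernoulli m : ℚ) : ℚ_[p])‖ ≤ (p : ℝ) ^ (-1 : ℤ) := by
        rw [key]
        refine le_trans (nsub_le_max _ _) ?_
        exact max_le hS2 hE
      rw [norm_mul, Padic.norm_p] at hnorm
      rw [← mul_le_mul_iff_right₀ (a := (p:ℝ)⁻¹) (by positivity)]
      calc (p:ℝ)⁻¹ * ‖((bernoulli m : ℚ) : ℚ_[p])‖ ≤ (p : ℝ) ^ (-1 : ℤ) := hnorm
        _ = (p:ℝ)⁻¹ * 1 := by rw [zpow_neg_one, mul_one]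


lemma fermat_dvd (h3 : 3 < p) {k : ℕ} (hk1 : 1 ≤ k) (hkp : k < p) :
    (p : ℤ) ∣ (k : ℤ) ^ (p - 1) - 1 := by
  have hknd : ¬ (p ∣ k) := by
    intro h
    have := Nat.le_of_dvd (by omega) h
    omega
  have hne : ((k : ℕ) : ZMod p) ≠ 0 := by
    rw [Ne, ZMod.natCast_eq_zero_iff]
    exact hknd
  rw [← ZMod.intCast_zmod_eq_zero_iff_dvd]
  push_cast
  rw [ZMod.pow_card_sub_one_eq_one hne]
  ring

lemma S_shift (m : ℕ) (hm : 1 ≤ m) :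
    ((∑ k ∈ range p, k ^ m : ℕ) : ℤ) = ∑ k ∈ Ico 1 p, (k : ℤ) ^ m := by
  push_cast
  rw [Finset.range_eq_Ico, Finset.sum_eq_sum_Ico_succ_bot hp.out.pos]
  simp [zero_pow (by omega : m ≠ 0)]

lemma const_shift : (p : ℤ) - 1 = ∑ _k ∈ Ico 1 p, (1 : ℤ) := by
  simp [Nat.card_Ico]
  push_cast [Nat.cast_sub hp.out.one_lt.le]
  ring

lemma comb0 (h3 : 3 < p) {i : ℕ} (hi : 1 ≤ i) :
    (p : ℤ) ∣ ((∑ k ∈ range p, k ^ (i * (p - 1)) : ℕ) : ℤ) - ((p : ℤ) - 1) := by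
  rw [S_shift _ (Nat.mul_pos (by omega) (by have := hp.out.two_le; omega : 0 < p - 1)), const_shift, ← Finset.sum_sub_distrib]
  apply Finset.dvd_sum
  intro k hk
  obtain ⟨hk1, hkp⟩ := mem_Ico.mp hk
  have hx : (k : ℤ) ^ (i * (p - 1)) = ((k : ℤ) ^ (p - 1)) ^ i := by
    rw [mul_comm, pow_mul]
  rw [hx]
  calc (p : ℤ) ∣ (k : ℤ) ^ (p - 1) - 1 := fermat_dvd h3 hk1 hkp
    _ ∣ ((k : ℤ) ^ (p - 1)) ^ i - 1 := by
        simpa using sub_dvd_pow_sub_pow ((k : ℤ) ^ (p - 1)) 1 i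

lemma comb1 (h3 : 3 < p) :
    (p : ℤ) ^ 2 ∣ 2 * ((∑ k ∈ range p, k ^ (1 * (p - 1)) : ℕ) : ℤ)
      - ((∑ k ∈ range p, k ^ (2 * (p - 1)) : ℕ) : ℤ) - ((p : ℤ) - 1) := by
  have hm : 1 ≤ p - 1 := by have := hp.out.two_le; omega
  rw [S_shift (1 * (p-1)) (by omega), S_shift (2 * (p-1)) (by omega), const_shift,
    Finset.mul_sum, ← Finset.sum_sub_distrib, ← Finset.sum_sub_distrib]
  apply Finset.dvd_sum
  intro k hk
  obtain ⟨hk1, hkp⟩ := mem_Ico.mp hk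
  obtain ⟨t, ht⟩ := fermat_dvd h3 hk1 hkp
  have h1 : (k : ℤ) ^ (1 * (p - 1)) = (k : ℤ) ^ (p - 1) := by rw [one_mul]
  have h2 : (k : ℤ) ^ (2 * (p - 1)) = ((k : ℤ) ^ (p - 1)) ^ 2 := by rw [mul_comm, pow_mul]
  have key : 2 * (k : ℤ) ^ (1*(p-1)) - (k : ℤ) ^ (2*(p-1)) - 1
      = -(((k : ℤ) ^ (p - 1) - 1) ^ 2) := by rw [h1, h2]; ring
  rw [key, show (k : ℤ) ^ (p - 1) - 1 = p * t from by linarith [ht]]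
  exact ⟨-t ^ 2, by ring⟩

lemma comb2 (h3 : 3 < p) :
    (p : ℤ) ^ 2 ∣ 3 * ((∑ k ∈ range p, k ^ (2 * (p - 1)) : ℕ) : ℤ)
      - 2 * ((∑ k ∈ range p, k ^ (3 * (p - 1)) : ℕ) : ℤ) - ((p : ℤ) - 1) := by
  have hm : 1 ≤ p - 1 := by have := hp.out.two_le; omega
  rw [S_shift (2 * (p-1)) (by omega), S_shift (3 * (p-1)) (by omega), const_shift,
    Finset.mul_sum, Finset.mul_sum, ← Finset.sum_sub_distrib, ← Finset.sum_sub_distrib]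
  apply Finset.dvd_sum
  intro k hk
  obtain ⟨hk1, hkp⟩ := mem_Ico.mp hk
  obtain ⟨t, ht⟩ := fermat_dvd h3 hk1 hkp
  have h2 : (k : ℤ) ^ (2 * (p - 1)) = ((k : ℤ) ^ (p - 1)) ^ 2 := by rw [mul_comm, pow_mul]
  have h3' : (k : ℤ) ^ (3 * (p - 1)) = ((k : ℤ) ^ (p - 1)) ^ 3 := by rw [mul_comm, pow_mul]
  have key : 3 * (k : ℤ) ^ (2*(p-1)) - 2 * (k : ℤ) ^ (3*(p-1)) - 1
      = -(((k : ℤ) ^ (p - 1) - 1) ^ 2 * (2 * (k : ℤ) ^ (p - 1) + 1)) := by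
    rw [h2, h3']; ring
  rw [key, show (k : ℤ) ^ (p - 1) - 1 = p * t from by linarith [ht]]
  exact ⟨-(t ^ 2 * (2 * (k : ℤ) ^ (p - 1) + 1)), by ring⟩

lemma comb3 (h3 : 3 < p) :
    (p : ℤ) ^ 3 ∣ 3 * ((∑ k ∈ range p, k ^ (1 * (p - 1)) : ℕ) : ℤ)
      - 3 * ((∑ k ∈ range p, k ^ (2 * (p - 1)) : ℕ) : ℤ)
      + ((∑ k ∈ range p, k ^ (3 * (p - 1)) : ℕ) : ℤ) - ((p : ℤ) - 1) := by
  have hm : 1 ≤ p - 1 := by have := hp.out.two_le; omega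
  rw [S_shift (1 * (p-1)) (by omega), S_shift (2 * (p-1)) (by omega),
    S_shift (3 * (p-1)) (by omega), const_shift,
    Finset.mul_sum, Finset.mul_sum, ← Finset.sum_sub_distrib, ← Finset.sum_add_distrib,
    ← Finset.sum_sub_distrib]
  apply Finset.dvd_sum
  intro k hk
  obtain ⟨hk1, hkp⟩ := mem_Ico.mp hk
  obtain ⟨t, ht⟩ := fermat_dvd h3 hk1 hkp
  have h1 : (k : ℤ) ^ (1 * (p - 1)) = (k : ℤ) ^ (p - 1) := by rw [one_mul]
  have h2 : (k : ℤ) ^ (2 * (p - 1)) = ((k : ℤ) ^ (p - 1)) ^ 2 := by rw [mul_comm, pow_mul]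
  have h3' : (k : ℤ) ^ (3 * (p - 1)) = ((k : ℤ) ^ (p - 1)) ^ 3 := by rw [mul_comm, pow_mul]
  have key : 3 * (k : ℤ) ^ (1*(p-1)) - 3 * (k : ℤ) ^ (2*(p-1)) + (k : ℤ) ^ (3*(p-1)) - 1
      = ((k : ℤ) ^ (p - 1) - 1) ^ 3 := by rw [h1, h2, h3']; ring
  rw [key, show (k : ℤ) ^ (p - 1) - 1 = p * t from by linarith [ht]]
  exact ⟨t ^ 3, by ring⟩

lemma norm_p_sub_one (h3 : 3 < p) : ‖(p : ℚ_[p]) - 1‖ = 1 := by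
  have hp1 : (1:ℝ) < p := by exact_mod_cast hp.out.one_lt
  have hlt : ‖(p : ℚ_[p])‖ < 1 := by
    rw [Padic.norm_p]
    exact inv_lt_one_of_one_lt₀ hp1
  have hne : ‖(p : ℚ_[p])‖ ≠ ‖(-1 : ℚ_[p])‖ := by
    rw [norm_neg, norm_one]
    exact hlt.ne
  rw [sub_eq_add_neg, Padic.add_eq_max_of_ne hne, norm_neg, norm_one]
  rw [max_eq_right hlt.le]

lemma exists_padicInt {x : ℚ_[p]} {k : ℕ} (hx : ‖x‖ ≤ (p : ℝ) ^ (-(k : ℤ))) :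
    ∃ z : ℤ_[p], x = (p : ℚ_[p]) ^ k * z := by
  have hpne : (p : ℚ_[p]) ≠ 0 := by
    exact_mod_cast Nat.cast_ne_zero.mpr hp.out.pos.ne'
  have hpk : ((p : ℚ_[p])) ^ k ≠ 0 := pow_ne_zero _ hpne
  have hnorm : ‖x / (p : ℚ_[p]) ^ k‖ ≤ 1 := by
    rw [norm_div, norm_pow, Padic.norm_p]
    have heq : ((p : ℝ)⁻¹) ^ k = (p : ℝ) ^ (-(k : ℤ)) := by
      rw [inv_pow, ← zpow_natCast, ← zpow_neg]
    have hppos : (0:ℝ) < p := by exact_mod_cast hp.out.pos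
    rw [heq, div_le_one (zpow_pos hppos _)]
    exact hx
  refine ⟨⟨x / (p : ℚ_[p]) ^ k, hnorm⟩, ?_⟩
  show x = (p : ℚ_[p]) ^ k * (x / (p : ℚ_[p]) ^ k)
  field_simp


lemma E_norm_weak (h3 : 3 < p) {m : ℕ} (hm : 1 ≤ m) :
    ‖∑ j ∈ range m, ((bernoulli j : ℚ) : ℚ_[p]) * (m.choose j : ℚ_[p])
        * (p : ℚ_[p]) ^ (m + 1 - j) / ((m + 1 - j : ℕ) : ℚ_[p])‖ ≤ (p : ℝ) ^ (-1 : ℤ) := by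
  have hp1 : (1:ℝ) < p := by exact_mod_cast hp.out.one_lt
  apply norm_sum_le_of_forall_le_of_nonneg (by positivity)
  intro j hj
  have hj' : j < m := mem_range.mp hj
  have hb := (bern_norm h3 j).1
  have hT := norm_term_le h3 hj' hb (by positivity)
  refine le_trans hT ?_
  have hmin : 2 ≤ min (m + 1 - j) 4 := by
    have : 2 ≤ m + 1 - j := by omega
    omega
  calc (p:ℝ) * (p : ℝ) ^ (-((min (m + 1 - j) 4 : ℕ) : ℤ))
      ≤ (p:ℝ) ^ (1:ℤ) * (p : ℝ) ^ (-(2:ℤ)) := by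
        apply mul_le_mul ?_ ?_ (by positivity) (by positivity)
        · simp
        · apply zpow_le_zpow_right₀ hp1.le; omega
    _ = (p : ℝ) ^ (-1 : ℤ) := by
        rw [← zpow_add₀ (by positivity)]
        norm_num

lemma E_norm_strong (h3 : 3 < p) {i : ℕ} (hi1 : 1 ≤ i) (hi3 : i ≤ 3) :
    ‖∑ j ∈ range (i * (p - 1)), ((bernoulli j : ℚ) : ℚ_[p]) * ((i * (p - 1)).choose j : ℚ_[p])
        * (p : ℚ_[p]) ^ (i * (p - 1) + 1 - j) / ((i * (p - 1) + 1 - j : ℕ) : ℚ_[p])‖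
      ≤ (p : ℝ) ^ (-3 : ℤ) := by
  have hp5 := five_le h3
  have hp1 : (1:ℝ) < p := by exact_mod_cast hp.out.one_lt
  have hpne : (p:ℝ) ≠ 0 := by positivity
  have hm4 : 4 ≤ i * (p - 1) := le_trans (by omega) (Nat.le_mul_of_pos_left (p - 1) (by omega))
  apply norm_sum_le_of_forall_le_of_nonneg (by positivity)
  intro j hj
  have hj' : j < i * (p - 1) := mem_range.mp hj
  by_cases hlast : j = i * (p - 1) - 1
  · have hpe : Even (p - 1) := Nat.Odd.sub_odd (hp.out.odd_of_ne_two (by omega)) odd_one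
    have hme : Even (i * (p - 1)) := hpe.mul_left i
    have hjodd : Odd j := by
      rw [hlast]
      exact Nat.Even.sub_odd (by omega) hme odd_one
    have hbz : bernoulli j = 0 := by
      rw [bernoulli_eq_bernoulli'_of_ne_one (by omega)]
      exact bernoulli'_eq_zero_of_odd hjodd (by omega)
    rw [hbz]
    simp only [Rat.cast_zero, zero_mul, zero_div, norm_zero]
    positivity
  · have hj2 : j + 2 ≤ i * (p - 1) := by omega
    by_cases hD : (p - 1) ∣ j ∧ j ≠ 0
    · obtain ⟨⟨c, hc⟩, hj0⟩ := hD
      have h1 : (p - 1) * c < (p - 1) * i := by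
        calc (p - 1) * c = j := hc.symm
          _ < i * (p - 1) := hj'
          _ = (p - 1) * i := by ring
      have hci : c < i := Nat.lt_of_mul_lt_mul_left h1
      have hcc : (p - 1) * (c + 1) ≤ (p - 1) * i := Nat.mul_le_mul_left _ (by omega)
      have hsp : p ≤ i * (p - 1) + 1 - j := by
        have hx : (p - 1) * (c + 1) = j + (p - 1) := by rw [hc]; ring
        have hy : (p - 1) * i = i * (p - 1) := by ring
        omega
      have hT := norm_term_le h3 hj' (bern_norm h3 j).1 (by positivity)
      refine le_trans hT ?_
      have hmin : min (i * (p - 1) + 1 - j) 4 = 4 := by omega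
      rw [hmin]
      apply le_of_eq
      calc (p:ℝ) * (p:ℝ) ^ (-((4:ℕ) : ℤ)) = (p:ℝ) ^ (1:ℤ) * (p:ℝ) ^ (-(4:ℤ)) := by norm_num
        _ = (p:ℝ) ^ (-3:ℤ) := by
            rw [← zpow_add₀ hpne]
            norm_num
    · have hb := (bern_norm h3 j).2 hD
      have hT := norm_term_le h3 hj' hb zero_le_one
      refine le_trans hT ?_
      rw [one_mul]
      apply zpow_le_zpow_right₀ hp1.le
      have h3' : 3 ≤ min (i * (p - 1) + 1 - j) 4 := by omega
      omega

lemma norm_two_mul_le (x : ℚ_[p]) : ‖(2 : ℚ_[p]) * x‖ ≤ ‖x‖ := by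
  rw [norm_mul]
  have h2 : ‖(2 : ℚ_[p])‖ ≤ 1 := by
    have := Padic.norm_int_le_one (p := p) 2
    simpa using this
  calc ‖(2:ℚ_[p])‖ * ‖x‖ ≤ 1 * ‖x‖ := mul_le_mul_of_nonneg_right h2 (norm_nonneg _)
    _ = ‖x‖ := one_mul _

lemma norm_three_mul_le (x : ℚ_[p]) : ‖(3 : ℚ_[p]) * x‖ ≤ ‖x‖ := by
  rw [norm_mul]
  have h2 : ‖(3 : ℚ_[p])‖ ≤ 1 := by
    have := Padic.norm_int_le_one (p := p) 3
    simpa using this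
  calc ‖(3:ℚ_[p])‖ * ‖x‖ ≤ 1 * ‖x‖ := mul_le_mul_of_nonneg_right h2 (norm_nonneg _)
    _ = ‖x‖ := one_mul _

end BernV



/-- Lemma on Bernoulli combinations: for a prime `p > 3`, with
`V i = p·B_{i(p-1)}/(p-1) - 1 ∈ ℤ_p`, one has `V i ≡ 0 (mod p)` for all `i ≥ 1`,
`2V₁ - V₂ ≡ 0 (mod p²)`, `3V₂ - 2V₃ ≡ 0 (mod p²)`, and
`3V₁ - 3V₂ + V₃ ≡ 0 (mod p³)`. -/
theorem bernoulli_V_congruences (p : ℕ) [hp : Fact p.Prime] (h3 : 3 < p)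
    (V : ℕ → ℚ_[p])
    (hV : ∀ i, V i = (p : ℚ_[p]) * ((bernoulli (i * (p - 1)) : ℚ) : ℚ_[p]) / ((p : ℚ_[p]) - 1) - 1) :
    (∀ i, 1 ≤ i → ∃ z : ℤ_[p], V i = (p : ℚ_[p]) * (z : ℚ_[p])) ∧
    (∃ z : ℤ_[p], 2 * V 1 - V 2 = (p : ℚ_[p]) ^ 2 * (z : ℚ_[p])) ∧
    (∃ z : ℤ_[p], 3 * V 2 - 2 * V 3 = (p : ℚ_[p]) ^ 2 * (z : ℚ_[p])) ∧
    (∃ z : ℤ_[p], 3 * V 1 - 3 * V 2 + V 3 = (p : ℚ_[p]) ^ 3 * (z : ℚ_[p])) := by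
  classical
  have hp1 : (1:ℝ) < p := by exact_mod_cast hp.out.one_lt
  have hu : ‖(p : ℚ_[p]) - 1‖ = 1 := BernV.norm_p_sub_one h3
  have hune : (p : ℚ_[p]) - 1 ≠ 0 := by
    intro h
    rw [h, norm_zero] at hu
    norm_num at hu
  have hmpos : ∀ i : ℕ, 1 ≤ i → 1 ≤ i * (p - 1) := fun i hi =>
    Nat.one_le_iff_ne_zero.mpr (Nat.mul_ne_zero (by omega) (by omega))
  have hglue : ∀ i : ℕ, 1 ≤ i → ((p : ℚ_[p]) - 1) * V i
      = (((∑ k ∈ Finset.range p, k ^ (i * (p - 1)) : ℕ) : ℚ_[p]) - ((p : ℚ_[p]) - 1))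
        - ∑ j ∈ Finset.range (i * (p - 1)), ((bernoulli j : ℚ) : ℚ_[p])
            * ((i * (p - 1)).choose j : ℚ_[p]) * (p : ℚ_[p]) ^ (i * (p - 1) + 1 - j)
            / ((i * (p - 1) + 1 - j : ℕ) : ℚ_[p]) := by
    intro i hi
    have h1 : ((p : ℚ_[p]) - 1) * V i
        = (p : ℚ_[p]) * ((bernoulli (i * (p - 1)) : ℚ) : ℚ_[p]) - ((p : ℚ_[p]) - 1) := by
      rw [hV i]
      field_simp
    rw [h1, BernV.faulhaber_padic (hmpos i hi)]
    ring
  have normInt : ∀ (x : ℤ) (n : ℕ), ((p:ℤ)^n ∣ x) → ‖((x : ℤ) : ℚ_[p])‖ ≤ (p:ℝ) ^ (-(n:ℤ)) := by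
    intro x n hd
    simpa using (Padic.norm_int_le_pow_iff_dvd (p := p) x n).mpr hd
  -- Part 1 : every V i is divisible by p
  have hV1 : ∀ i : ℕ, 1 ≤ i → ‖V i‖ ≤ (p:ℝ) ^ (-(1:ℤ)) := by
    intro i hi
    have hEw := BernV.E_norm_weak (p := p) h3 (hmpos i hi)
    have hSw : ‖((∑ k ∈ Finset.range p, k ^ (i * (p - 1)) : ℕ) : ℚ_[p]) - ((p : ℚ_[p]) - 1)‖
        ≤ (p:ℝ) ^ (-(1:ℤ)) := by
      have hcast : ((∑ k ∈ Finset.range p, k ^ (i * (p - 1)) : ℕ) : ℚ_[p]) - ((p : ℚ_[p]) - 1)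
          = ((((∑ k ∈ Finset.range p, k ^ (i * (p - 1)) : ℕ) : ℤ) - ((p:ℤ) - 1) : ℤ) : ℚ_[p]) := by
        push_cast
        ring
      rw [hcast]
      exact normInt _ 1 (by simpa using BernV.comb0 h3 hi)
    have hfin : ‖((p : ℚ_[p]) - 1) * V i‖ ≤ (p:ℝ) ^ (-(1:ℤ)) := by
      rw [hglue i hi]
      exact le_trans (BernV.nsub_le_max _ _) (max_le hSw hEw)
    rwa [norm_mul, hu, one_mul] at hfin
  have hE1 := BernV.E_norm_strong (p := p) h3 (i := 1) le_rfl (by omega)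
  have hE2 := BernV.E_norm_strong (p := p) h3 (i := 2) (by omega) (by omega)
  have hE3 := BernV.E_norm_strong (p := p) h3 (i := 3) (by omega) (by omega)
  have g1 := hglue 1 le_rfl
  have g2 := hglue 2 (by omega)
  have g3 := hglue 3 (by omega)
  have hd1 := BernV.comb1 (p := p) h3
  have hd2 := BernV.comb2 (p := p) h3
  have hd3 := BernV.comb3 (p := p) h3
  set S1 : ℕ := ∑ k ∈ Finset.range p, k ^ (1 * (p - 1)) with hS1def
  set S2 : ℕ := ∑ k ∈ Finset.range p, k ^ (2 * (p - 1)) with hS2def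
  set S3 : ℕ := ∑ k ∈ Finset.range p, k ^ (3 * (p - 1)) with hS3def
  set E1 : ℚ_[p] := ∑ j ∈ Finset.range (1 * (p - 1)), ((bernoulli j : ℚ) : ℚ_[p])
      * ((1 * (p - 1)).choose j : ℚ_[p]) * (p : ℚ_[p]) ^ (1 * (p - 1) + 1 - j)
      / ((1 * (p - 1) + 1 - j : ℕ) : ℚ_[p]) with hE1def
  set E2 : ℚ_[p] := ∑ j ∈ Finset.range (2 * (p - 1)), ((bernoulli j : ℚ) : ℚ_[p])
      * ((2 * (p - 1)).choose j : ℚ_[p]) * (p : ℚ_[p]) ^ (2 * (p - 1) + 1 - j)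
      / ((2 * (p - 1) + 1 - j : ℕ) : ℚ_[p]) with hE2def
  set E3 : ℚ_[p] := ∑ j ∈ Finset.range (3 * (p - 1)), ((bernoulli j : ℚ) : ℚ_[p])
      * ((3 * (p - 1)).choose j : ℚ_[p]) * (p : ℚ_[p]) ^ (3 * (p - 1) + 1 - j)
      / ((3 * (p - 1) + 1 - j : ℕ) : ℚ_[p]) with hE3def
  have hw32 : (p:ℝ) ^ (-(3:ℤ)) ≤ (p:ℝ) ^ (-(2:ℤ)) := zpow_le_zpow_right₀ hp1.le (by norm_num)
  -- second congruence
  have hcomb1 : ‖2 * V 1 - V 2‖ ≤ (p:ℝ) ^ (-(2:ℤ)) := by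
    have hx : ((p : ℚ_[p]) - 1) * (2 * V 1 - V 2)
        = ((2 * ((S1:ℕ):ℚ_[p]) - ((S2:ℕ):ℚ_[p]) - ((p : ℚ_[p]) - 1)) - (2 * E1 - E2)) := by
      calc ((p : ℚ_[p]) - 1) * (2 * V 1 - V 2)
          = 2 * (((p : ℚ_[p]) - 1) * V 1) - ((p : ℚ_[p]) - 1) * V 2 := by ring
        _ = _ := by rw [g1, g2]; ring
    have hsc : ‖2 * ((S1:ℕ):ℚ_[p]) - ((S2:ℕ):ℚ_[p]) - ((p:ℚ_[p]) - 1)‖ ≤ (p:ℝ) ^ (-(2:ℤ)) := by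
      have hcast : 2 * ((S1:ℕ):ℚ_[p]) - ((S2:ℕ):ℚ_[p]) - ((p:ℚ_[p]) - 1)
          = (((2 * (S1:ℤ) - (S2:ℤ) - ((p:ℤ)-1)) : ℤ) : ℚ_[p]) := by
        push_cast
        ring
      rw [hcast]
      exact normInt _ 2 hd1
    have hfin : ‖((p:ℚ_[p]) - 1) * (2 * V 1 - V 2)‖ ≤ (p:ℝ) ^ (-(2:ℤ)) := by
      rw [hx]
      refine le_trans (BernV.nsub_le_max _ _) (max_le hsc ?_)
      refine le_trans (BernV.nsub_le_max _ _) (max_le ?_ ?_)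
      · exact le_trans (BernV.norm_two_mul_le _) (le_trans hE1 hw32)
      · exact le_trans hE2 hw32
    rwa [norm_mul, hu, one_mul] at hfin
  -- third congruence
  have hcomb2 : ‖3 * V 2 - 2 * V 3‖ ≤ (p:ℝ) ^ (-(2:ℤ)) := by
    have hx : ((p : ℚ_[p]) - 1) * (3 * V 2 - 2 * V 3)
        = ((3 * ((S2:ℕ):ℚ_[p]) - 2 * ((S3:ℕ):ℚ_[p]) - ((p : ℚ_[p]) - 1)) - (3 * E2 - 2 * E3)) := by
      calc ((p : ℚ_[p]) - 1) * (3 * V 2 - 2 * V 3)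
          = 3 * (((p : ℚ_[p]) - 1) * V 2) - 2 * (((p : ℚ_[p]) - 1) * V 3) := by ring
        _ = _ := by rw [g2, g3]; ring
    have hsc : ‖3 * ((S2:ℕ):ℚ_[p]) - 2 * ((S3:ℕ):ℚ_[p]) - ((p:ℚ_[p]) - 1)‖ ≤ (p:ℝ) ^ (-(2:ℤ)) := by
      have hcast : 3 * ((S2:ℕ):ℚ_[p]) - 2 * ((S3:ℕ):ℚ_[p]) - ((p:ℚ_[p]) - 1)
          = (((3 * (S2:ℤ) - 2 * (S3:ℤ) - ((p:ℤ)-1)) : ℤ) : ℚ_[p]) := by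
        push_cast
        ring
      rw [hcast]
      exact normInt _ 2 hd2
    have hfin : ‖((p:ℚ_[p]) - 1) * (3 * V 2 - 2 * V 3)‖ ≤ (p:ℝ) ^ (-(2:ℤ)) := by
      rw [hx]
      refine le_trans (BernV.nsub_le_max _ _) (max_le hsc ?_)
      refine le_trans (BernV.nsub_le_max _ _) (max_le ?_ ?_)
      · exact le_trans (BernV.norm_three_mul_le _) (le_trans hE2 hw32)
      · exact le_trans (BernV.norm_two_mul_le _) (le_trans hE3 hw32)
    rwa [norm_mul, hu, one_mul] at hfin
  -- fourth congruence
  have hcomb3 : ‖3 * V 1 - 3 * V 2 + V 3‖ ≤ (p:ℝ) ^ (-(3:ℤ)) := by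
    have hx : ((p : ℚ_[p]) - 1) * (3 * V 1 - 3 * V 2 + V 3)
        = ((3 * ((S1:ℕ):ℚ_[p]) - 3 * ((S2:ℕ):ℚ_[p]) + ((S3:ℕ):ℚ_[p]) - ((p : ℚ_[p]) - 1))
          - (3 * E1 - 3 * E2 + E3)) := by
      calc ((p : ℚ_[p]) - 1) * (3 * V 1 - 3 * V 2 + V 3)
          = 3 * (((p : ℚ_[p]) - 1) * V 1) - 3 * (((p : ℚ_[p]) - 1) * V 2)
            + (((p : ℚ_[p]) - 1) * V 3) := by ring
        _ = _ := by rw [g1, g2, g3]; ring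
    have hsc : ‖3 * ((S1:ℕ):ℚ_[p]) - 3 * ((S2:ℕ):ℚ_[p]) + ((S3:ℕ):ℚ_[p]) - ((p:ℚ_[p]) - 1)‖
        ≤ (p:ℝ) ^ (-(3:ℤ)) := by
      have hcast : 3 * ((S1:ℕ):ℚ_[p]) - 3 * ((S2:ℕ):ℚ_[p]) + ((S3:ℕ):ℚ_[p]) - ((p:ℚ_[p]) - 1)
          = (((3 * (S1:ℤ) - 3 * (S2:ℤ) + (S3:ℤ) - ((p:ℤ)-1)) : ℤ) : ℚ_[p]) := by
        push_cast
        ring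
      rw [hcast]
      exact normInt _ 3 hd3
    have hfin : ‖((p:ℚ_[p]) - 1) * (3 * V 1 - 3 * V 2 + V 3)‖ ≤ (p:ℝ) ^ (-(3:ℤ)) := by
      rw [hx]
      refine le_trans (BernV.nsub_le_max _ _) (max_le hsc ?_)
      have hstep : ‖3 * E1 - 3 * E2 + E3‖ ≤ max ‖3 * E1 - 3 * E2‖ ‖E3‖ := by
        simpa using IsUltrametricDist.norm_add_le_max (3 * E1 - 3 * E2) E3
      refine le_trans hstep (max_le ?_ ?_)
      · refine le_trans (BernV.nsub_le_max _ _) (max_le ?_ ?_)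
        · exact le_trans (BernV.norm_three_mul_le _) hE1
        · exact le_trans (BernV.norm_three_mul_le _) hE2
      · exact hE3
    rwa [norm_mul, hu, one_mul] at hfin
  refine ⟨?_, ?_, ?_, ?_⟩
  · intro i hi
    obtain ⟨z, hz⟩ := BernV.exists_padicInt (p := p) (k := 1) (x := V i)
      (by exact_mod_cast hV1 i hi)
    exact ⟨z, by rw [hz, pow_one]⟩
  · obtain ⟨z, hz⟩ := BernV.exists_padicInt (p := p) (k := 2) (x := 2 * V 1 - V 2)
      (by exact_mod_cast hcomb1)
    exact ⟨z, hz⟩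
  · obtain ⟨z, hz⟩ := BernV.exists_padicInt (p := p) (k := 2) (x := 3 * V 2 - 2 * V 3)
      (by exact_mod_cast hcomb2)
    exact ⟨z, hz⟩
  · obtain ⟨z, hz⟩ := BernV.exists_padicInt (p := p) (k := 3) (x := 3 * V 1 - 3 * V 2 + V 3)
      (by exact_mod_cast hcomb3)
    exact ⟨z, hz⟩
end
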